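/- arXiv:0704.3286 — 2 statements merged into one kernel-verified Lean document; each statement's English description precedes it below -/
import Mathlib

section
/- Killing one generator of a free colored Milnor group yields the free colored Milnor group on the remaining generators, with kernel the normal closure of that generator. Precisely: fix a color n : ι with r n = s + 1, let CMF = F/X be the free colored Milnor group on generators x_{ij} (i : ι, j : Fin (r i)), and let CMF' be the free colored Milnor group on the same generators with the single generator x_{n,s} removed (i.e., with r n replaced by s). Then the homomorphism CMF → CMF' sending the class of x_{n,s} to 1 and the class of every other generator x_{ij} to the class of x_{ij} is a well-defined surjection whose kernel is exactly the normal closure in CMF of the class of x_{n,s}. -/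
open scoped commutatorElement

/-- The Milnor relations: the normal closure in the free group on generators
`x_{ij}` (indexed by `(i, j) : Σ i : ι, Fin (r i)`, where `i` is the color) of all
commutators of two conjugates of generators of the same color. -/
def milnorRels (ι : Type*) (r : ι → ℕ) : Subgroup (FreeGroup (Σ i : ι, Fin (r i))) :=
  Subgroup.normalClosure
    {w | ∃ (i : ι) (j k : Fin (r i)) (g₁ g₂ : FreeGroup (Σ i : ι, Fin (r i))),
      w = ⁅g₁ * FreeGroup.of ⟨i, j⟩ * g₁⁻¹, g₂ * FreeGroup.of ⟨i, k⟩ * g₂⁻¹⁆}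

instance (ι : Type*) (r : ι → ℕ) : (milnorRels ι r).Normal :=
  Subgroup.normalClosure_normal

/-- The free colored Milnor group `CMF = F/X`. -/
abbrev CMF (ι : Type*) (r : ι → ℕ) : Type _ :=
  FreeGroup (Σ i : ι, Fin (r i)) ⧸ milnorRels ι r

/-- The class of the generator `x_{ij}` in `CMF`. -/
def xg (ι : Type*) (r : ι → ℕ) (i : ι) (j : Fin (r i)) : CMF ι r :=
  QuotientGroup.mk (FreeGroup.of ⟨i, j⟩)

section KillAux

variable {ι : Type*} [DecidableEq ι] (r : ι → ℕ) (n : ι) (s : ℕ)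

/-- The forward map on generators: kill `x_{n,j}` for `j ≥ s`, keep everything else. -/
def fwdFun (p : Σ i : ι, Fin (r i)) : FreeGroup (Σ i : ι, Fin (Function.update r n s i)) :=
  if h : p.1 = n then
    (if h2 : (p.2 : ℕ) < s then
      FreeGroup.of ⟨n, ⟨(p.2 : ℕ), h2.trans_eq (Function.update_self n s r).symm⟩⟩
    else 1)
  else FreeGroup.of ⟨p.1, Fin.cast (Function.update_of_ne h s r).symm p.2⟩

/-- The backward map on generators. -/
def bwdFun (hn : r n = s + 1) (p : Σ i : ι, Fin (Function.update r n s i)) :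
    FreeGroup (Σ i : ι, Fin (r i)) :=
  if h : p.1 = n then
    FreeGroup.of ⟨n, Fin.cast hn.symm
      (Fin.castSucc (Fin.cast (show Function.update r n s p.1 = s by
        rw [h, Function.update_self]) p.2))⟩
  else FreeGroup.of ⟨p.1, Fin.cast (Function.update_of_ne h s r) p.2⟩

lemma fwdFun_cases (i : ι) (j : Fin (r i)) :
    fwdFun r n s ⟨i, j⟩ = 1 ∨
      ∃ j' : Fin (Function.update r n s i), fwdFun r n s ⟨i, j⟩ = FreeGroup.of ⟨i, j'⟩ := by
  unfold fwdFun
  by_cases h : i = n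
  · subst h
    by_cases h2 : (j : ℕ) < s
    · exact Or.inr ⟨_, by rw [dif_pos rfl, dif_pos h2]⟩
    · exact Or.inl (by rw [dif_pos rfl, dif_neg h2])
  · exact Or.inr ⟨_, by rw [dif_neg h]⟩

lemma fwd_mem_rels :
    ∀ w ∈ {w | ∃ (i : ι) (j k : Fin (r i)) (g₁ g₂ : FreeGroup (Σ i : ι, Fin (r i))),
      w = ⁅g₁ * FreeGroup.of ⟨i, j⟩ * g₁⁻¹, g₂ * FreeGroup.of ⟨i, k⟩ * g₂⁻¹⁆},
      FreeGroup.lift (fwdFun r n s) w ∈ milnorRels ι (Function.update r n s) := by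
  rintro w ⟨i, j, k, g₁, g₂, rfl⟩
  simp only [map_commutatorElement, map_mul, map_inv, FreeGroup.lift_apply_of]
  rcases fwdFun_cases r n s i j with hj | ⟨j', hj⟩ <;>
    rcases fwdFun_cases r n s i k with hk | ⟨k', hk⟩ <;> rw [hj, hk]
  · simpa using one_mem _
  · simpa using one_mem _
  · simpa using one_mem _
  · exact Subgroup.subset_normalClosure ⟨i, j', k', _, _, rfl⟩

lemma bwd_mem_rels (hn : r n = s + 1) :
    ∀ w ∈ {w | ∃ (i : ι) (j k : Fin (Function.update r n s i))
        (g₁ g₂ : FreeGroup (Σ i : ι, Fin (Function.update r n s i))),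
      w = ⁅g₁ * FreeGroup.of ⟨i, j⟩ * g₁⁻¹, g₂ * FreeGroup.of ⟨i, k⟩ * g₂⁻¹⁆},
      FreeGroup.lift (bwdFun r n s hn) w ∈ milnorRels ι r := by
  rintro w ⟨i, j, k, g₁, g₂, rfl⟩
  simp only [map_commutatorElement, map_mul, map_inv, FreeGroup.lift_apply_of]
  by_cases h : i = n
  · subst h
    unfold bwdFun
    rw [dif_pos rfl, dif_pos rfl]
    exact Subgroup.subset_normalClosure ⟨i, _, _, _, _, rfl⟩
  · unfold bwdFun
    rw [dif_neg h, dif_neg h]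
    exact Subgroup.subset_normalClosure ⟨i, _, _, _, _, rfl⟩

/-- The induced map `CMF ι r →* CMF ι (update r n s)`. -/
def killPhi : CMF ι r →* CMF ι (Function.update r n s) :=
  QuotientGroup.lift (milnorRels ι r)
    ((QuotientGroup.mk' (milnorRels ι (Function.update r n s))).comp
      (FreeGroup.lift (fwdFun r n s)))
    (by
      intro w hw
      refine Subgroup.normalClosure_le_normal ?_ hw
      intro x hx
      simp only [SetLike.mem_coe, MonoidHom.mem_ker, MonoidHom.comp_apply,
        QuotientGroup.mk'_apply, QuotientGroup.eq_one_iff]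
      exact fwd_mem_rels r n s x hx)

/-- The induced map backwards. -/
def killPsi (hn : r n = s + 1) : CMF ι (Function.update r n s) →* CMF ι r :=
  QuotientGroup.lift (milnorRels ι (Function.update r n s))
    ((QuotientGroup.mk' (milnorRels ι r)).comp (FreeGroup.lift (bwdFun r n s hn)))
    (by
      intro w hw
      refine Subgroup.normalClosure_le_normal ?_ hw
      intro x hx
      simp only [SetLike.mem_coe, MonoidHom.mem_ker, MonoidHom.comp_apply,
        QuotientGroup.mk'_apply, QuotientGroup.eq_one_iff]
      exact bwd_mem_rels r n s hn x hx)

@[simp] lemma killPhi_mk (w : FreeGroup (Σ i : ι, Fin (r i))) :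
    killPhi r n s (QuotientGroup.mk w) =
      QuotientGroup.mk (FreeGroup.lift (fwdFun r n s) w) := rfl

@[simp] lemma killPsi_mk (hn : r n = s + 1)
    (w : FreeGroup (Σ i : ι, Fin (Function.update r n s i))) :
    killPsi r n s hn (QuotientGroup.mk w) =
      QuotientGroup.mk (FreeGroup.lift (bwdFun r n s hn) w) := rfl

end KillAux

/-- killing the single generator `x_{n,s}` of the free colored Milnor
group on generators `x_{ij}` (`i : ι`, `j : Fin (r i)`, with `r n = s + 1`) yields
the free colored Milnor group on the remaining generators (i.e. with `r n` replaced
by `s`): there is a homomorphism sending the class of `x_{n,s}` to `1` and the class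
of every other generator to the class of the corresponding generator, and it is a
surjection whose kernel is exactly the normal closure of the class of `x_{n,s}`. -/
theorem kill_one_generator (ι : Type*) [Fintype ι] [DecidableEq ι] (r : ι → ℕ)
    (n : ι) (s : ℕ) (hn : r n = s + 1) :
    ∃ φ : CMF ι r →* CMF ι (Function.update r n s),
      φ (xg ι r n (Fin.cast hn.symm (Fin.last s))) = 1 ∧
      (∀ (i : ι) (hi : i ≠ n) (j : Fin (r i)),
        φ (xg ι r i j) =
          xg ι (Function.update r n s) i
            (Fin.cast (Function.update_of_ne hi s r).symm j)) ∧
      (∀ (j : Fin (r n)) (hj : (j : ℕ) < s),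
        φ (xg ι r n j) =
          xg ι (Function.update r n s) n
            (Fin.cast (Function.update_self n s r).symm ⟨(j : ℕ), hj⟩)) ∧
      Function.Surjective φ ∧
      φ.ker = Subgroup.normalClosure {xg ι r n (Fin.cast hn.symm (Fin.last s))} := by
  classical
  have h1 : killPhi r n s (xg ι r n (Fin.cast hn.symm (Fin.last s))) = 1 := by
    rw [xg, killPhi_mk, FreeGroup.lift_apply_of]
    unfold fwdFun
    rw [dif_pos rfl, dif_neg (by simp)]
    simp
  have hcomp : (killPhi r n s).comp (killPsi r n s hn) = MonoidHom.id _ := by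
    apply QuotientGroup.monoidHom_ext
    apply FreeGroup.ext_hom
    rintro ⟨i, j⟩
    simp only [MonoidHom.comp_apply, QuotientGroup.mk'_apply, MonoidHom.id_apply,
      killPsi_mk, FreeGroup.lift_apply_of]
    by_cases h : i = n
    · subst h
      unfold bwdFun
      rw [dif_pos rfl, killPhi_mk, FreeGroup.lift_apply_of]
      unfold fwdFun
      rw [dif_pos rfl, dif_pos (by simpa using j.isLt)]
      rfl
    · unfold bwdFun
      rw [dif_neg h, killPhi_mk, FreeGroup.lift_apply_of]
      unfold fwdFun
      rw [dif_neg h]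
      rfl
  refine ⟨killPhi r n s, h1, ?_, ?_, ?_, ?_⟩
  · intro i hi j
    rw [xg, killPhi_mk, FreeGroup.lift_apply_of]
    unfold fwdFun
    rw [dif_neg hi]
    rfl
  · intro j hj
    rw [xg, killPhi_mk, FreeGroup.lift_apply_of]
    unfold fwdFun
    rw [dif_pos rfl, dif_pos hj]
    rfl
  · exact fun y => ⟨killPsi r n s hn y, DFunLike.congr_fun hcomp y⟩
  · set N := Subgroup.normalClosure {xg ι r n (Fin.cast hn.symm (Fin.last s))} with hN
    haveI : N.Normal := Subgroup.normalClosure_normal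
    have hpsiphi : ((QuotientGroup.mk' N).comp (killPsi r n s hn)).comp (killPhi r n s) =
        QuotientGroup.mk' N := by
      apply QuotientGroup.monoidHom_ext
      apply FreeGroup.ext_hom
      rintro ⟨i, j⟩
      simp only [MonoidHom.comp_apply, QuotientGroup.mk'_apply, killPhi_mk, FreeGroup.lift_apply_of]
      by_cases h : i = n
      · subst h
        by_cases h2 : (j : ℕ) < s
        · unfold fwdFun
          rw [dif_pos rfl, dif_pos h2, killPsi_mk, FreeGroup.lift_apply_of]
          unfold bwdFun
          rw [dif_pos rfl]
          rfl
        · unfold fwdFun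
          rw [dif_pos rfl, dif_neg h2]
          have hj : j = Fin.cast hn.symm (Fin.last s) := by
            have := j.isLt
            ext
            simp only [Fin.coe_cast, Fin.val_last]
            omega
          rw [hj]
          simp only [QuotientGroup.mk_one, map_one]
          have hmem : (QuotientGroup.mk (FreeGroup.of ⟨i, Fin.cast hn.symm (Fin.last s)⟩) :
              CMF ι r) ∈ N := Subgroup.subset_normalClosure (Set.mem_singleton _)
          rw [eq_comm, QuotientGroup.eq_one_iff]
          exact hmem
      · unfold fwdFun
        rw [dif_neg h, killPsi_mk, FreeGroup.lift_apply_of]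
        unfold bwdFun
        rw [dif_neg h]
        rfl
    apply le_antisymm
    · intro x hx
      have hx1 : killPhi r n s x = 1 := hx
      have := DFunLike.congr_fun hpsiphi x
      simp only [MonoidHom.comp_apply, hx1, map_one, QuotientGroup.mk'_apply] at this
      exact (QuotientGroup.eq_one_iff x).mp this.symm
    · refine Subgroup.normalClosure_le_normal ?_
      rw [Set.singleton_subset_iff]
      exact h1
end

section
/- Commutation with a fixed generator of a free colored Milnor group is detected after killing all other generators of the same color. Precisely: fix a color c : ι with r c = s + 1, let CMF = F/X be the free colored Milnor group on generators x_{ij} (i : ι, j : Fin (r i)), and let CMF' be the free colored Milnor group obtained by deleting all generators x_{c,j} of color c except x_{c,0} (i.e., with r c replaced by 1). Let q : CMF → CMF' be the surjection sending x_{c,j} to 1 for j ≠ 0 and every other generator to the corresponding generator. Then for every l ∈ CMF: [x_{c,0}, l] = 1 in CMF if and only if [q(x_{c,0}), q(l)] = 1 in CMF'. -/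
open scoped commutatorElement

theorem cmf_rel {ι : Type*} {r : ι → ℕ} (i : ι) (j k : Fin (r i)) (a b : CMF ι r) :
    ⁅a * xg ι r i j * a⁻¹, b * xg ι r i k * b⁻¹⁆ = 1 := by
  obtain ⟨g₁, rfl⟩ := QuotientGroup.mk_surjective a
  obtain ⟨g₂, rfl⟩ := QuotientGroup.mk_surjective b
  have hmem : ⁅g₁ * FreeGroup.of ⟨i, j⟩ * g₁⁻¹, g₂ * FreeGroup.of ⟨i, k⟩ * g₂⁻¹⁆ ∈
      milnorRels ι r :=
    Subgroup.subset_normalClosure ⟨i, j, k, g₁, g₂, rfl⟩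
  have h1 : (QuotientGroup.mk ⁅g₁ * FreeGroup.of ⟨i, j⟩ * g₁⁻¹,
      g₂ * FreeGroup.of ⟨i, k⟩ * g₂⁻¹⁆ : CMF ι r) = 1 :=
    (QuotientGroup.eq_one_iff _).mpr hmem
  exact h1

section Aux

variable {ι : Type*} [DecidableEq ι] {r : ι → ℕ} (c : ι) (hc0 : 0 < r c)

/-- The generator-level section of the killing map. -/
def killSec : (Σ i : ι, Fin (Function.update r c 1 i)) → CMF ι r := fun p =>
  if h : p.1 = c then xg ι r c ⟨0, hc0⟩
  else xg ι r p.1 (Fin.cast (Function.update_of_ne h 1 r) p.2)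

theorem killSec_ker : milnorRels ι (Function.update r c 1) ≤
    (FreeGroup.lift (killSec c hc0)).ker := by
  apply Subgroup.normalClosure_le_normal
  rintro w ⟨i, j, k, g₁, g₂, rfl⟩
  have hw : FreeGroup.lift (killSec c hc0) ⁅g₁ * FreeGroup.of ⟨i, j⟩ * g₁⁻¹,
      g₂ * FreeGroup.of ⟨i, k⟩ * g₂⁻¹⁆
      = ⁅FreeGroup.lift (killSec c hc0) g₁ * killSec c hc0 ⟨i, j⟩ *
          (FreeGroup.lift (killSec c hc0) g₁)⁻¹,
         FreeGroup.lift (killSec c hc0) g₂ * killSec c hc0 ⟨i, k⟩ *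
          (FreeGroup.lift (killSec c hc0) g₂)⁻¹⁆ := by
    simp [commutatorElement]
  rw [SetLike.mem_coe, MonoidHom.mem_ker, hw]
  by_cases h : i = c
  · subst h
    simp only [killSec, dif_pos rfl]
    exact cmf_rel _ _ _ _ _
  · simp only [killSec, dif_neg h]
    exact cmf_rel _ _ _ _ _

/-- The section homomorphism `CMF' →* CMF`. -/
def killP : CMF ι (Function.update r c 1) →* CMF ι r :=
  QuotientGroup.lift _ (FreeGroup.lift (killSec c hc0)) (killSec_ker c hc0)

theorem killP_xg (i : ι) (j : Fin (Function.update r c 1 i)) :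
    killP c hc0 (xg ι (Function.update r c 1) i j) = killSec c hc0 ⟨i, j⟩ := by
  simp [killP, xg, QuotientGroup.lift_mk]

end Aux

/-- commutation with the generator `x_{c,0}` of the free colored Milnor
group is detected after killing all the other generators of color `c`: if
`q : CMF → CMF'` is the surjection onto the free colored Milnor group with `r c`
replaced by `1`, sending `x_{c,j}` to `1` for `j ≠ 0` and every other generator to
the corresponding generator, then for all `l`, `[x_{c,0}, l] = 1` in `CMF` if and
only if `[q x_{c,0}, q l] = 1` in `CMF'`. -/
theorem commutes_iff_commutes_after_killing (ι : Type*) [Fintype ι] [DecidableEq ι]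
    (r : ι → ℕ) (c : ι) (s : ℕ) (hc : r c = s + 1)
    (q : CMF ι r →* CMF ι (Function.update r c 1))
    (hq0 : q (xg ι r c (Fin.cast hc.symm 0)) =
      xg ι (Function.update r c 1) c (Fin.cast (Function.update_self c 1 r).symm 0))
    (hqne : ∀ j : Fin (r c), (j : ℕ) ≠ 0 → q (xg ι r c j) = 1)
    (hqother : ∀ (i : ι) (hi : i ≠ c) (j : Fin (r i)),
      q (xg ι r i j) =
        xg ι (Function.update r c 1) i (Fin.cast (Function.update_of_ne hi 1 r).symm j)) :
    ∀ l : CMF ι r,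
      ⁅xg ι r c (Fin.cast hc.symm 0), l⁆ = 1 ↔
        ⁅q (xg ι r c (Fin.cast hc.symm 0)), q l⁆ = 1 := by
  classical
  have hc0 : 0 < r c := by omega
  let x₀ : CMF ι r := xg ι r c (Fin.cast hc.symm 0)
  have hx0 : xg ι r c ⟨0, hc0⟩ = x₀ := by
    rfl
  let p : CMF ι (Function.update r c 1) →* CMF ι r := killP c hc0
  let N : Subgroup (CMF ι r) := Subgroup.normalClosure (Set.range (xg ι r c))
  let π : CMF ι r →* CMF ι r ⧸ N := QuotientGroup.mk' N
  have key : π.comp (p.comp q) = π := by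
    apply QuotientGroup.monoidHom_ext
    apply FreeGroup.ext_hom
    rintro ⟨i, j⟩
    simp only [MonoidHom.comp_apply, QuotientGroup.mk'_apply]
    show π (p (q (xg ι r i j))) = π (xg ι r i j)
    by_cases h : i = c
    · subst i
      have hjN : π (xg ι r c j) = 1 :=
        (QuotientGroup.eq_one_iff _).mpr
          (Subgroup.subset_normalClosure (Set.mem_range_self j))
      rw [hjN]
      by_cases hj : (j : ℕ) = 0
      · have hje : j = Fin.cast hc.symm 0 := Fin.ext (by simpa using hj)
        rw [hje, hq0]
        show π (killP c hc0 _) = 1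
        rw [killP_xg]
        simp only [killSec, dif_pos rfl]
        exact (QuotientGroup.eq_one_iff _).mpr
          (Subgroup.subset_normalClosure (Set.mem_range_self _))
      · rw [hqne j hj, map_one, map_one]
    · rw [hqother i h j]
      show π (killP c hc0 _) = _
      rw [killP_xg]
      simp only [killSec, dif_neg h]
      rw [show Fin.cast (Function.update_of_ne h 1 r)
            (Fin.cast (Function.update_of_ne h 1 r).symm j) = j from Fin.ext (by simp)]
  have hcent : ∀ n ∈ N, Commute x₀ n := by
    intro n hn
    refine Subgroup.closure_induction (p := fun x _ => Commute x₀ x) ?_ ?_ ?_ ?_ hn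
    · intro y hy
      obtain ⟨a, ⟨jj, rfl⟩, hconj⟩ := Group.mem_conjugatesOfSet_iff.mp hy
      obtain ⟨g, rfl⟩ := isConj_iff.mp hconj
      have := commutatorElement_eq_one_iff_commute.mp
        (cmf_rel (r := r) c (Fin.cast hc.symm 0) jj 1 g)
      simpa using this
    · exact Commute.one_right x₀
    · intro a b _ _ ha hb; exact ha.mul_right hb
    · intro a _ ha; exact ha.inv_right
  intro l
  constructor
  · intro h
    rw [← map_commutatorElement, h, map_one]
  · intro h
    have hpqx : p (q x₀) = x₀ := by
      show killP c hc0 (q (xg ι r c (Fin.cast hc.symm 0))) = x₀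
      rw [hq0, killP_xg]
      simp only [killSec, dif_pos rfl]
      exact hx0
    have hm : Commute x₀ (p (q l)) := by
      apply commutatorElement_eq_one_iff_commute.mp
      have h2 := congrArg p h
      rwa [map_commutatorElement, hpqx, map_one] at h2
    have hmem : (p (q l))⁻¹ * l ∈ N := by
      have h1 : π (p (q l)) = π l := DFunLike.congr_fun key l
      have h2 : π ((p (q l))⁻¹ * l) = 1 := by
        rw [map_mul, map_inv, h1]
        group
      exact (QuotientGroup.eq_one_iff _).mp h2
    have hcl : Commute x₀ l := by
      have h3 := hm.mul_right (hcent _ hmem)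
      simpa using h3
    exact commutatorElement_eq_one_iff_commute.mpr hcl
end
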